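/- For every n ≥ 3 and any two vectors a, b ∈ V_n, if Q_0(a) ≠ Q_0(b) then the intersection H_a ∩ H_b has exactly 4^{n−1} − 1 points, and if a ≠ b with Q_0(a) = Q_0(b) = 1 then H_a ∩ H_b has exactly 4^{n−1} − 2^{n−1} − 1 points. -/

import Mathlib

/-- The symplectic vector space `V_n = (ZMod 2)^(2n)` of the n-qubit real Pauli group. -/
abbrev V (n : ℕ) : Type := Fin (2 * n) → ZMod 2

/-- The index `2i-1` (0-based: `2i`). -/
def i0 {n : ℕ} (i : Fin n) : Fin (2 * n) := ⟨2 * i.1, by have := i.isLt; omega⟩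

/-- The index `2i` (0-based: `2i+1`). -/
def i1 {n : ℕ} (i : Fin n) : Fin (2 * n) := ⟨2 * i.1 + 1, by have := i.isLt; omega⟩

/-- The symplectic form `⟨x,y⟩ = Σ_{i=1}^n (x_{2i−1} y_{2i} + x_{2i} y_{2i−1})`. -/
def sform {n : ℕ} (x y : V n) : ZMod 2 :=
  ∑ i : Fin n, (x (i0 i) * y (i1 i) + x (i1 i) * y (i0 i))

/-- The point set `P = V_n \ {0}` of the incidence geometry `G_n`. -/
def P (n : ℕ) : Set (V n) := {x | x ≠ 0}

/-- The line set `L = {{a,b,a+b} : a,b ∈ P, a ≠ b, ⟨a,b⟩ = 0}` of `G_n`. -/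
def Lines (n : ℕ) : Set (Set (V n)) :=
  {l | ∃ a b : V n, a ∈ P n ∧ b ∈ P n ∧ a ≠ b ∧ sform a b = 0 ∧ l = {a, b, a + b}}

/-- A subset `H ⊆ P` satisfies condition (H1) if every line meets it in exactly
one point or is contained in it. -/
def IsH1 {n : ℕ} (H : Set (V n)) : Prop :=
  H ⊆ P n ∧ ∀ l ∈ Lines n, (H ∩ l).ncard = 1 ∨ l ⊆ H

/-- A geometric hyperplane: a subset satisfying (H1) which is not the full point set. -/
def IsHyperplane {n : ℕ} (H : Set (V n)) : Prop := IsH1 H ∧ H ≠ P n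

/-- `A ⊞ B`: the complement in `P` of the symmetric difference of `A` and `B`. -/
def boxAdd {n : ℕ} (A B : Set (V n)) : Set (V n) := P n \ (symmDiff A B)

/-- The quadratic form `Q_0(x) = Σ_{i=1}^n x_{2i−1} x_{2i}`. -/
def Q0 {n : ℕ} (x : V n) : ZMod 2 := ∑ i : Fin n, x (i0 i) * x (i1 i)

/-- The quadratic form `Q_p(x) = Q_0(x) + ⟨p,x⟩`. -/
def Qf {n : ℕ} (p x : V n) : ZMod 2 := Q0 x + sform p x

/-- The perp-set hyperplane `C_p = {x ∈ P : ⟨p,x⟩ = 0}`. -/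
def Cset {n : ℕ} (p : V n) : Set (V n) := {x ∈ P n | sform p x = 0}

/-- The quadric hyperplane `H_p = {x ∈ P : Q_p(x) = 0}`. -/
def Hset {n : ℕ} (p : V n) : Set (V n) := {x ∈ P n | Qf p x = 0}

/-- The symplectic transvection `t_p : x ↦ x + ⟨p,x⟩·p`. -/
def tv {n : ℕ} (p : V n) (x : V n) : V n := x + sform p x • p



open Finset in
private lemma VV.card_univ (n : ℕ) : (Finset.univ : Finset (V n)).card = 2 ^ (2 * n) := by
  rw [Finset.card_univ]
  simp [Fintype.card_fun]

private def VV.chi (z : ZMod 2) : ℤ := (-1) ^ z.val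

private lemma VV.chi_add (a b : ZMod 2) : VV.chi (a + b) = VV.chi a * VV.chi b := by
  revert a b; decide

private lemma VV.chi_sum {ι : Type*} (s : Finset ι) (g : ι → ZMod 2) :
    VV.chi (∑ i ∈ s, g i) = ∏ i ∈ s, VV.chi (g i) := by
  induction s using Finset.cons_induction with
  | empty => simp [VV.chi]
  | cons a s ha ih => rw [Finset.sum_cons, Finset.prod_cons, VV.chi_add, ih]

private def VV.pe (n : ℕ) (y : Fin n → ZMod 2 × ZMod 2) : V n := fun j =>
  if h : j.val % 2 = 0 then (y ⟨j.val / 2, by have := j.isLt; omega⟩).1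
  else (y ⟨j.val / 2, by have := j.isLt; omega⟩).2

private lemma VV.pe_i0 {n : ℕ} (y : Fin n → ZMod 2 × ZMod 2) (i : Fin n) :
    VV.pe n y (i0 i) = (y i).1 := by
  have h0 : (2 * i.val) % 2 = 0 := by omega
  simp only [VV.pe, i0, h0, dif_pos]
  refine (dif_pos h0).trans ?_
  exact congrArg (fun j => (y j).1) (Fin.ext (show (2 * i.val) / 2 = i.val by omega))

private lemma VV.pe_i1 {n : ℕ} (y : Fin n → ZMod 2 × ZMod 2) (i : Fin n) :
    VV.pe n y (i1 i) = (y i).2 := by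
  have h1 : ¬((2 * i.val + 1) % 2 = 0) := by omega
  simp only [VV.pe, i1, h1, dif_neg, not_false_iff]
  refine (dif_neg h1).trans ?_
  exact congrArg (fun j => (y j).2) (Fin.ext (show (2 * i.val + 1) / 2 = i.val by omega))

private def VV.pairEquiv (n : ℕ) : (Fin n → ZMod 2 × ZMod 2) ≃ V n where
  toFun := VV.pe n
  invFun x i := (x (i0 i), x (i1 i))
  left_inv y := by funext i; exact Prod.ext (VV.pe_i0 y i) (VV.pe_i1 y i)
  right_inv x := by
    funext j
    by_cases h : j.val % 2 = 0
    · simp only [VV.pe, h, dif_pos, i0]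
      exact congrArg x (Fin.ext (show 2 * (j.val / 2) = j.val by omega))
    · simp only [VV.pe, h, dif_neg, not_false_iff, i1]
      exact congrArg x (Fin.ext (show 2 * (j.val / 2) + 1 = j.val by omega))

private lemma VV.sum_chi (n : ℕ) : ∑ x : V n, VV.chi (Q0 x) = 2 ^ n := by
  rw [← Equiv.sum_comp (VV.pairEquiv n) (fun x => VV.chi (Q0 x))]
  have h1 : ∀ y : Fin n → ZMod 2 × ZMod 2, VV.chi (Q0 (VV.pairEquiv n y)) =
      ∏ i : Fin n, VV.chi ((y i).1 * (y i).2) := by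
    intro y
    rw [Q0]
    simp only [VV.pairEquiv, Equiv.coe_fn_mk, VV.pe_i0, VV.pe_i1]
    exact VV.chi_sum _ _
  simp only [h1]
  have h2 := Finset.prod_univ_sum (fun _ : Fin n => (Finset.univ : Finset (ZMod 2 × ZMod 2)))
    (fun _ w => VV.chi (w.1 * w.2))
  rw [Fintype.piFinset_univ] at h2
  rw [← h2, show (∑ w : ZMod 2 × ZMod 2, VV.chi (w.1 * w.2)) = 2 from by decide]
  simp

open Finset in
private lemma VV.cardQ0 (n : ℕ) :
    (Finset.univ.filter fun x : V n => Q0 x = 0).card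
      + (Finset.univ.filter fun x : V n => Q0 x = 1).card = 2 ^ (2 * n) ∧
    (Finset.univ.filter fun x : V n => Q0 x = 0).card
      = (Finset.univ.filter fun x : V n => Q0 x = 1).card + 2 ^ n := by
  have hneg : (Finset.univ.filter fun x : V n => ¬ Q0 x = 0)
      = Finset.univ.filter fun x : V n => Q0 x = 1 := by
    apply Finset.filter_congr
    intro x _
    exact (show ∀ z : ZMod 2, (¬ z = 0) ↔ z = 1 by decide) _
  have hpart := Finset.card_filter_add_card_filter_not
    (s := (Finset.univ : Finset (V n))) (fun x => Q0 x = 0)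
  rw [hneg, VV.card_univ] at hpart
  refine ⟨hpart, ?_⟩
  have hs := VV.sum_chi n
  rw [← Finset.sum_filter_add_sum_filter_not Finset.univ (fun x : V n => Q0 x = 0)
    (fun x => VV.chi (Q0 x))] at hs
  have e1 : ∑ x ∈ Finset.univ.filter (fun x : V n => Q0 x = 0), VV.chi (Q0 x)
      = ((Finset.univ.filter fun x : V n => Q0 x = 0).card : ℤ) := by
    rw [Finset.sum_congr rfl (fun x hx => by
      rw [(Finset.mem_filter.mp hx).2]; rfl : ∀ x ∈ Finset.univ.filter (fun x : V n => Q0 x = 0),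
        VV.chi (Q0 x) = 1)]
    simp
  have e2 : ∑ x ∈ Finset.univ.filter (fun x : V n => ¬ Q0 x = 0), VV.chi (Q0 x)
      = -((Finset.univ.filter fun x : V n => Q0 x = 1).card : ℤ) := by
    rw [hneg]
    rw [Finset.sum_congr rfl (fun x hx => by
      rw [(Finset.mem_filter.mp hx).2]; rfl : ∀ x ∈ Finset.univ.filter (fun x : V n => Q0 x = 1),
        VV.chi (Q0 x) = -1)]
    simp
  rw [e1, e2] at hs
  have h2n : ((2 : ℤ) ^ n) = ((2 ^ n : ℕ) : ℤ) := by push_cast; ring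
  rw [h2n] at hs
  omega

private lemma VV.Q0_add {n : ℕ} (a x : V n) : Q0 (x + a) = Q0 x + Q0 a + sform a x := by
  simp only [Q0, sform, Pi.add_apply, ← Finset.sum_add_distrib]
  exact Finset.sum_congr rfl fun i _ => by ring

private lemma VV.sform_add_left {n : ℕ} (a b x : V n) :
    sform (a + b) x = sform a x + sform b x := by
  simp only [sform, Pi.add_apply, ← Finset.sum_add_distrib]
  exact Finset.sum_congr rfl fun i _ => by ring

private lemma VV.sform_add_right {n : ℕ} (c x y : V n) :
    sform c (x + y) = sform c x + sform c y := by
  simp only [sform, Pi.add_apply, ← Finset.sum_add_distrib]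
  exact Finset.sum_congr rfl fun i _ => by ring

private lemma VV.Qf_zero {n : ℕ} (p : V n) : Qf p 0 = 0 := by
  simp [Qf, Q0, sform]

private lemma VV.card_Qf {n : ℕ} (a : V n) :
    (Finset.univ.filter fun x : V n => Qf a x = 0).card
      = (Finset.univ.filter fun x : V n => Q0 x = Q0 a).card := by
  apply Finset.card_equiv (Equiv.addRight a)
  intro x
  simp only [Finset.mem_filter, Finset.mem_univ, true_and, Equiv.coe_addRight]
  have key : Q0 (x + a) = Qf a x + Q0 a := by rw [VV.Q0_add, Qf]; ring
  rw [key]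
  exact (show ∀ z w : ZMod 2, (z = 0 ↔ z + w = w) by decide) _ _

private lemma VV.sform_exists_one {n : ℕ} (c : V n) (hc : c ≠ 0) :
    ∃ x : V n, sform c x = 1 := by
  obtain ⟨j, hj⟩ : ∃ j, c j ≠ 0 := by
    by_contra h
    push_neg at h
    exact hc (funext fun j => h j)
  have hj1 : c j = 1 := by revert hj; generalize c j = z; revert z; decide
  have hjlt := j.isLt
  set i : Fin n := ⟨j.val / 2, by omega⟩ with hi
  by_cases hpar : j.val % 2 = 0
  · refine ⟨Pi.single (i1 i) 1, ?_⟩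
    rw [sform, Finset.sum_eq_single i]
    · have e0 : i0 i = j := Fin.ext (show 2 * (j.val / 2) = j.val by omega)
      have hne : (i0 i : Fin (2 * n)) ≠ i1 i := by
        intro h; simp only [i0, i1, Fin.mk.injEq] at h; omega
      rw [Pi.single_eq_same, Pi.single_eq_of_ne hne, e0, hj1]; ring
    · intro b _ hb
      have h1 : (i1 b : Fin (2 * n)) ≠ i1 i := by
        intro h
        simp only [i1, Fin.mk.injEq] at h
        exact hb (Fin.ext (show b.val = j.val / 2 by omega))
      have h2 : (i0 b : Fin (2 * n)) ≠ i1 i := by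
        intro h; simp only [i0, i1, Fin.mk.injEq] at h; omega
      rw [Pi.single_eq_of_ne h1, Pi.single_eq_of_ne h2]; ring
    · simp
  · refine ⟨Pi.single (i0 i) 1, ?_⟩
    rw [sform, Finset.sum_eq_single i]
    · have e1 : i1 i = j := Fin.ext (show 2 * (j.val / 2) + 1 = j.val by omega)
      have hne : (i1 i : Fin (2 * n)) ≠ i0 i := by
        intro h; simp only [i0, i1, Fin.mk.injEq] at h; omega
      rw [Pi.single_eq_same, Pi.single_eq_of_ne hne, e1, hj1]; ring
    · intro b _ hb
      have h1 : (i0 b : Fin (2 * n)) ≠ i0 i := by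
        intro h
        simp only [i0, Fin.mk.injEq] at h
        exact hb (Fin.ext (show b.val = j.val / 2 by omega))
      have h2 : (i1 b : Fin (2 * n)) ≠ i0 i := by
        intro h; simp only [i0, i1, Fin.mk.injEq] at h; omega
      rw [Pi.single_eq_of_ne h1, Pi.single_eq_of_ne h2]; ring
    · simp

private lemma VV.card_sform {n : ℕ} (c : V n) (hc : c ≠ 0) :
    (Finset.univ.filter fun x : V n => sform c x = 0).card * 2 = 2 ^ (2 * n) := by
  obtain ⟨x1, hx1⟩ := VV.sform_exists_one c hc
  have hbij : (Finset.univ.filter fun x : V n => sform c x = 0).card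
      = (Finset.univ.filter fun x : V n => ¬ sform c x = 0).card := by
    apply Finset.card_equiv (Equiv.addRight x1)
    intro x
    simp only [Finset.mem_filter, Finset.mem_univ, true_and, Equiv.coe_addRight]
    rw [VV.sform_add_right, hx1]
    exact (show ∀ z : ZMod 2, (z = 0 ↔ ¬ z + 1 = 0) by decide) _
  have hpart := Finset.card_filter_add_card_filter_not
    (s := (Finset.univ : Finset (V n))) (fun x => sform c x = 0)
  rw [VV.card_univ] at hpart
  omega

private lemma VV.add_ne_zero {n : ℕ} {a b : V n} (hab : a ≠ b) : a + b ≠ 0 := by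
  intro h
  apply hab
  have hbb : b + b = 0 := funext fun j => (show ∀ z : ZMod 2, z + z = 0 by decide) _
  calc a = a + (b + b) := by rw [hbb, add_zero]
    _ = (a + b) + b := by ring
    _ = b := by rw [h, zero_add]

open Finset in
private lemma VV.card_joint {n : ℕ} (a b : V n) (hab : a ≠ b) :
    (Finset.univ.filter fun x : V n => Qf a x = 0 ∧ Qf b x = 0).card * 2
      + 2 ^ (2 * n)
    = (Finset.univ.filter fun x : V n => Qf a x = 0).card
      + (Finset.univ.filter fun x : V n => Qf b x = 0).card
      + (Finset.univ.filter fun x : V n => sform (a + b) x = 0).card := by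
  classical
  set c00 := (Finset.univ.filter fun x : V n => Qf a x = 0 ∧ Qf b x = 0) with hc00
  set c01 := (Finset.univ.filter fun x : V n => Qf a x = 0 ∧ ¬ Qf b x = 0) with hc01
  set c10 := (Finset.univ.filter fun x : V n => ¬ Qf a x = 0 ∧ Qf b x = 0) with hc10
  set c11 := (Finset.univ.filter fun x : V n => ¬ Qf a x = 0 ∧ ¬ Qf b x = 0) with hc11
  have eqA : c00.card + c01.card = (Finset.univ.filter fun x : V n => Qf a x = 0).card := by
    have := Finset.card_filter_add_card_filter_not
      (s := Finset.univ.filter fun x : V n => Qf a x = 0) (fun x => Qf b x = 0)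
    rwa [Finset.filter_filter, Finset.filter_filter] at this
  have eqB : c00.card + c10.card = (Finset.univ.filter fun x : V n => Qf b x = 0).card := by
    have := Finset.card_filter_add_card_filter_not
      (s := Finset.univ.filter fun x : V n => Qf b x = 0) (fun x => Qf a x = 0)
    rw [Finset.filter_filter, Finset.filter_filter] at this
    have e1 : Finset.filter (fun x : V n => Qf b x = 0 ∧ Qf a x = 0) Finset.univ = c00 := by
      rw [hc00]; exact Finset.filter_congr fun x _ => and_comm
    have e2 : Finset.filter (fun x : V n => Qf b x = 0 ∧ ¬ Qf a x = 0) Finset.univ = c10 := by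
      rw [hc10]; exact Finset.filter_congr fun x _ => and_comm
    rw [e1, e2] at this
    exact this
  have eqTot : c00.card + c01.card + (c10.card + c11.card) = 2 ^ (2 * n) := by
    have h1 := Finset.card_filter_add_card_filter_not
      (s := (Finset.univ : Finset (V n))) (fun x => Qf a x = 0)
    have h2 := Finset.card_filter_add_card_filter_not
      (s := Finset.univ.filter fun x : V n => ¬ Qf a x = 0) (fun x => Qf b x = 0)
    rw [Finset.filter_filter, Finset.filter_filter] at h2
    rw [VV.card_univ] at h1
    rw [eqA]
    rw [hc10, hc11]
    omega
  have eqS : c00.card + c11.card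
      = (Finset.univ.filter fun x : V n => sform (a + b) x = 0).card := by
    have hiff : ∀ x : V n, (sform (a + b) x = 0)
        ↔ ((Qf a x = 0 ∧ Qf b x = 0) ∨ (¬ Qf a x = 0 ∧ ¬ Qf b x = 0)) := by
      intro x
      have hb : Qf b x = Qf a x + sform (a + b) x := by
        rw [Qf, Qf, VV.sform_add_left]
        generalize Q0 x = u
        generalize sform a x = v
        generalize sform b x = w
        revert u v w; decide
      rw [hb]
      generalize Qf a x = z
      generalize sform (a + b) x = w
      revert z w; decide
    have : (Finset.univ.filter fun x : V n => sform (a + b) x = 0) = c00 ∪ c11 := by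
      rw [hc00, hc11, ← Finset.filter_or]
      exact Finset.filter_congr fun x _ => hiff x
    rw [this, Finset.card_union_of_disjoint]
    rw [Finset.disjoint_left]
    intro x hx hx'
    exact (Finset.mem_filter.mp hx').2.1 (Finset.mem_filter.mp hx).2.1
  omega

theorem stmt19 (n : ℕ) (hn : 3 ≤ n) :
    (∀ a b : V n, Q0 a ≠ Q0 b → (Hset a ∩ Hset b).ncard = 4 ^ (n - 1) - 1) ∧
    (∀ a b : V n, a ≠ b → Q0 a = 1 → Q0 b = 1 →
      (Hset a ∩ Hset b).ncard = 4 ^ (n - 1) - 2 ^ (n - 1) - 1) := by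
  have hn1 : 1 ≤ n := by omega
  set k := 2 ^ (n - 1) with hk
  have h2n : 2 ^ n = k * 2 := by rw [hk, ← pow_succ]; congr 1; omega
  have h4 : 4 ^ (n - 1) = k * k := by
    rw [hk, show (4 : ℕ) = 2 * 2 from rfl, mul_pow]
  have h22n : 2 ^ (2 * n) = 4 * (k * k) := by
    have he : 2 * n = (n - 1) + (n - 1) + 2 := by omega
    rw [he, pow_add, pow_add, hk]; ring
  have hset : ∀ a b : V n, Hset a ∩ Hset b =
      ↑((Finset.univ.filter fun x : V n => Qf a x = 0 ∧ Qf b x = 0).erase 0) := by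
    intro a b
    ext x
    simp only [Hset, P, Set.mem_inter_iff, Set.mem_setOf_eq, Finset.coe_erase, Set.mem_diff,
      Finset.mem_coe, Finset.mem_filter, Finset.mem_univ, true_and, Set.mem_singleton_iff]
    tauto
  have hncard : ∀ a b : V n, (Hset a ∩ Hset b).ncard =
      (Finset.univ.filter fun x : V n => Qf a x = 0 ∧ Qf b x = 0).card - 1 := by
    intro a b
    rw [hset a b, Set.ncard_coe_finset, Finset.card_erase_of_mem]
    exact Finset.mem_filter.mpr ⟨Finset.mem_univ _, VV.Qf_zero a, VV.Qf_zero b⟩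
  obtain ⟨hN, hN2⟩ := VV.cardQ0 n
  constructor
  · intro a b hQ
    have hab : a ≠ b := fun h => hQ (by rw [h])
    have hj := VV.card_joint a b hab
    have hTa := VV.card_Qf a
    have hTb := VV.card_Qf b
    have hABsum : (Finset.univ.filter fun x : V n => Q0 x = Q0 a).card
        + (Finset.univ.filter fun x : V n => Q0 x = Q0 b).card = 2 ^ (2 * n) := by
      rcases (show ∀ z w : ZMod 2, z ≠ w → (z = 0 ∧ w = 1) ∨ (z = 1 ∧ w = 0) by decide)
        _ _ hQ with ⟨h1, h2⟩ | ⟨h1, h2⟩ <;> rw [h1, h2] <;> omega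
    have hS := VV.card_sform (a + b) (VV.add_ne_zero hab)
    rw [hncard a b, h4]
    omega
  · intro a b hab hQa hQb
    have hj := VV.card_joint a b hab
    have hTa := VV.card_Qf a
    have hTb := VV.card_Qf b
    rw [hQa] at hTa
    rw [hQb] at hTb
    have hS := VV.card_sform (a + b) (VV.add_ne_zero hab)
    rw [hncard a b, h4]
    omega
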